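/- Conversely, if the multiplication (a # h)(b # g) = Σ a (h₍₁₎ · b) σ(h₍₂₎, g₍₁₎) # h₍₃₎ g₍₂₎ on B ⊗ H is associative with unit 1_B ⊗ 1_H, and σ : H ⊗ H → B is convolution-invertible with σ(1,h) = σ(h,1) = ε(h)1_B and 1 · b = b and h · 1_B = ε(h)1_B, then α is a weak action, σ satisfies the 2-cocycle condition, and B is a twisted H-module under α and σ. -/

import Mathlib

set_option maxHeartbeats 1000000
set_option synthInstance.maxHeartbeats 1000000
set_option maxRecDepth 10000


open TensorProduct LinearMap

noncomputable section

namespace CrossedGalois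

/-- Convolution product of two linear maps from a coalgebra to an algebra. -/
def conv (k : Type) [Field k] {C B : Type} [AddCommGroup C] [Module k C] [Coalgebra k C]
    [Ring B] [Algebra k B] (f g : C →ₗ[k] B) : C →ₗ[k] B :=
  (LinearMap.mul' k B) ∘ₗ (TensorProduct.map f g) ∘ₗ (Coalgebra.comul (R := k))

/-- The unit `η ∘ ε` for the convolution product. -/
def convOne (k : Type) [Field k] (C B : Type) [AddCommGroup C] [Module k C] [Coalgebra k C]
    [Ring B] [Algebra k B] : C →ₗ[k] B :=
  (Algebra.linearMap k B) ∘ₗ (Coalgebra.counit (R := k))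

/-- Convolution invertibility. -/
def ConvInvertible (k : Type) [Field k] {C B : Type} [AddCommGroup C] [Module k C]
    [Coalgebra k C] [Ring B] [Algebra k B] (f : C →ₗ[k] B) : Prop :=
  ∃ g : C →ₗ[k] B, conv k f g = convOne k C B ∧ conv k g f = convOne k C B

variable (k : Type) [Field k]

section CrossedProduct

variable (B H : Type) [Ring B] [Algebra k B] [Ring H] [Bialgebra k H]

/-- `h ↦ α (h ⊗ b)`. -/
def actOn (α : H ⊗[k] B →ₗ[k] B) (b : B) : H →ₗ[k] B :=
  α ∘ₗ ((TensorProduct.mk k H B).flip b)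

/-- `α` is a weak action of the bialgebra `H` on the algebra `B` :
`h · (ab) = Σ (h₁ · a)(h₂ · b)` and `h · 1 = ε(h) 1`. -/
structure IsWeakAction (α : H ⊗[k] B →ₗ[k] B) : Prop where
  smul_mul : ∀ (h : H) (a b : B),
    α (h ⊗ₜ (a * b)) =
      LinearMap.mul' k B ((TensorProduct.map α α)
        ((TensorProduct.tensorTensorTensorComm k H H B B)
          ((Coalgebra.comul (R := k) h) ⊗ₜ (a ⊗ₜ b))))
  smul_one : ∀ h : H, α (h ⊗ₜ (1 : B)) = (Coalgebra.counit (R := k) h) • (1 : B)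

/-- The 2-cocycle condition
`Σ (h₁ · σ(g₁,l₁)) σ(h₂, g₂l₂) = Σ σ(h₁,g₁) σ(h₂g₂, l)`
together with the normalisation `σ(h,1) = σ(1,h) = ε(h)1`. -/
structure IsCocycle (α : H ⊗[k] B →ₗ[k] B) (σ : H ⊗[k] H →ₗ[k] B) : Prop where
  cocycle :
    conv k (α ∘ₗ lTensor H σ) (σ ∘ₗ lTensor H (LinearMap.mul' k H)) =
    conv k (σ ∘ₗ lTensor H ((TensorProduct.rid k H).toLinearMap ∘ₗ
              lTensor H (Coalgebra.counit (R := k))))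
           (σ ∘ₗ (rTensor H (LinearMap.mul' k H)) ∘ₗ
              (TensorProduct.assoc k H H H).symm.toLinearMap)
  norm_right : ∀ h : H, σ (h ⊗ₜ (1 : H)) = (Coalgebra.counit (R := k) h) • (1 : B)
  norm_left : ∀ h : H, σ ((1 : H) ⊗ₜ h) = (Coalgebra.counit (R := k) h) • (1 : B)

/-- `B` is a twisted `H`-module:  `1 · b = b` and
`Σ (h₁ · (g₁ · b)) σ(h₂,g₂) = Σ σ(h₁,g₁) ((h₂g₂) · b)`. -/
structure IsTwistedModule (α : H ⊗[k] B →ₗ[k] B) (σ : H ⊗[k] H →ₗ[k] B) : Prop where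
  one_smul : ∀ b : B, α ((1 : H) ⊗ₜ b) = b
  twisted : ∀ b : B,
    conv k (α ∘ₗ lTensor H (actOn k B H α b)) σ =
    conv k σ ((actOn k B H α b) ∘ₗ LinearMap.mul' k H)

/-- The multiplication of the crossed product `B #_σ H`:
`(a # h)(b # g) = Σ a (h₁·b) σ(h₂,g₁) # h₃g₂`. -/
def cpMul (α : H ⊗[k] B →ₗ[k] B) (σ : H ⊗[k] H →ₗ[k] B) :
    (B ⊗[k] H) ⊗[k] (B ⊗[k] H) →ₗ[k] B ⊗[k] H :=
  (rTensor H (LinearMap.mul' k B)) ∘ₗ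
  (TensorProduct.assoc k B B H).symm.toLinearMap ∘ₗ
  (lTensor B
    ((rTensor H (LinearMap.mul' k B)) ∘ₗ
     (TensorProduct.assoc k B B H).symm.toLinearMap ∘ₗ
     (TensorProduct.map α (TensorProduct.map σ (LinearMap.mul' k H))) ∘ₗ
     (lTensor (H ⊗[k] B) (TensorProduct.tensorTensorTensorComm k H H H H).toLinearMap) ∘ₗ
     (TensorProduct.tensorTensorTensorComm k H (H ⊗[k] H) B (H ⊗[k] H)).toLinearMap ∘ₗ
     (TensorProduct.map ((lTensor H (Coalgebra.comul (R := k))) ∘ₗ (Coalgebra.comul (R := k)))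
       (lTensor B (Coalgebra.comul (R := k)))))) ∘ₗ
  (TensorProduct.assoc k B H (B ⊗[k] H)).toLinearMap

/-- The unit `1 # 1` of the crossed product. -/
def cpOne : B ⊗[k] H := (1 : B) ⊗ₜ (1 : H)

/-- The crossed product multiplication is associative with unit `1 ⊗ 1`. -/
def IsCpAlgebra (α : H ⊗[k] B →ₗ[k] B) (σ : H ⊗[k] H →ₗ[k] B) : Prop :=
  (∀ x y z : B ⊗[k] H,
      cpMul k B H α σ ((cpMul k B H α σ (x ⊗ₜ y)) ⊗ₜ z) =
      cpMul k B H α σ (x ⊗ₜ (cpMul k B H α σ (y ⊗ₜ z)))) ∧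
  (∀ x : B ⊗[k] H, cpMul k B H α σ ((cpOne k B H) ⊗ₜ x) = x) ∧
  (∀ x : B ⊗[k] H, cpMul k B H α σ (x ⊗ₜ (cpOne k B H)) = x)

/-- The right `H`-coaction `id_B ⊗ Δ` on `B ⊗ H`. -/
def cpCoact : B ⊗[k] H →ₗ[k] (B ⊗[k] H) ⊗[k] H :=
  (TensorProduct.assoc k B H H).symm.toLinearMap ∘ₗ lTensor B (Coalgebra.comul (R := k))

end CrossedProduct

section Galois

variable (H : Type) [Ring H] [Bialgebra k H]

/-- The submodule of `A ⊗ A` spanned by `xb ⊗ y - x ⊗ by` for `b` in a given subset `S`,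
with respect to a given multiplication map `M`; its quotient is `A ⊗_B A`. -/
def midRel {A : Type} [AddCommGroup A] [Module k A]
    (M : A ⊗[k] A →ₗ[k] A) (S : Set A) : Submodule k (A ⊗[k] A) :=
  Submodule.span k {z | ∃ x y b, b ∈ S ∧
    z = (M (x ⊗ₜ b)) ⊗ₜ y - x ⊗ₜ (M (b ⊗ₜ y))}

/-- The map `can' : A ⊗ A → A ⊗ H`, `x ⊗ y ↦ Σ x y₍₀₎ ⊗ y₍₁₎`. -/
def canMap {A : Type} [AddCommGroup A] [Module k A]
    (M : A ⊗[k] A →ₗ[k] A) (ρ : A →ₗ[k] A ⊗[k] H) : A ⊗[k] A →ₗ[k] A ⊗[k] H :=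
  (rTensor H M) ∘ₗ (TensorProduct.assoc k A A H).symm.toLinearMap ∘ₗ (lTensor A ρ)

/-- The extension is `H`-Galois: the canonical map descends to a bijection
`A ⊗_B A → A ⊗ H`. -/
def IsGalois {A : Type} [AddCommGroup A] [Module k A]
    (M : A ⊗[k] A →ₗ[k] A) (ρ : A →ₗ[k] A ⊗[k] H) (S : Set A) : Prop :=
  ∃ can : ((A ⊗[k] A) ⧸ midRel k M S) →ₗ[k] A ⊗[k] H,
    can ∘ₗ (midRel k M S).mkQ = canMap k H M ρ ∧ Function.Bijective can

/-- `A` is a right `H`-comodule algebra. -/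
structure IsComodAlg {A : Type} [Ring A] [Algebra k A]
    (ρ : A →ₗ[k] A ⊗[k] H) : Prop where
  coassoc : ∀ a : A, (rTensor H ρ) (ρ a) =
    (TensorProduct.assoc k A H H).symm ((lTensor A (Coalgebra.comul (R := k))) (ρ a))
  counit_id : ∀ a : A,
    (TensorProduct.rid k A) ((lTensor A (Coalgebra.counit (R := k))) (ρ a)) = a
  mul : ∀ a b : A, ρ (a * b) = ρ a * ρ b
  one : ρ 1 = 1

end Galois

end CrossedGalois

namespace CrossedGalois

section AuxProof
open Coalgebra

variable (k B H : Type) [Field k] [Ring B] [Algebra k B] [Ring H] [Bialgebra k H]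
variable (α : H ⊗[k] B →ₗ[k] B) (σ : H ⊗[k] H →ₗ[k] B)

def piH : H ⊗[k] H →ₗ[k] H :=
  (TensorProduct.rid k H).toLinearMap ∘ₗ lTensor H (counit (R := k))
def kapH : H ⊗[k] H →ₗ[k] H :=
  (TensorProduct.lid k H).toLinearMap ∘ₗ rTensor H (counit (R := k))

lemma piH_comul (h : H) : piH k H (comul (R := k) h) = h := by
  simp [piH, lTensor_counit_comul]

lemma kapH_comul (h : H) : kapH k H (comul (R := k) h) = h := by
  simp [kapH, rTensor_counit_comul]

def Psi : ((H ⊗[k] (H ⊗[k] H)) ⊗[k] (B ⊗[k] (H ⊗[k] H))) →ₗ[k] B ⊗[k] H :=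
  (rTensor H (LinearMap.mul' k B)) ∘ₗ
  (TensorProduct.assoc k B B H).symm.toLinearMap ∘ₗ
  (TensorProduct.map α (TensorProduct.map σ (LinearMap.mul' k H))) ∘ₗ
  (lTensor (H ⊗[k] B) (TensorProduct.tensorTensorTensorComm k H H H H).toLinearMap) ∘ₗ
  (TensorProduct.tensorTensorTensorComm k H (H ⊗[k] H) B (H ⊗[k] H)).toLinearMap

def W0 : (H ⊗[k] H) ⊗[k] B →ₗ[k] B ⊗[k] H :=
  TensorProduct.map α LinearMap.id ∘ₗ (TensorProduct.assoc k H B H).symm.toLinearMap ∘ₗ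
    lTensor H (TensorProduct.comm k H B).toLinearMap ∘ₗ (TensorProduct.assoc k H H B).toLinearMap

-- F1
lemma Psi_jj (hσ1r : ∀ h : H, σ (h ⊗ₜ (1 : H)) = (counit (R := k) h) • (1 : B)) :
    Psi k B H α σ ∘ₗ
      lTensor (H ⊗[k] (H ⊗[k] H)) ((TensorProduct.mk k B (H ⊗[k] H)).flip ((1:H) ⊗ₜ (1:H)))
    = W0 k B H α ∘ₗ rTensor B (lTensor H (kapH k H)) := by
  ext h1 h2 h3 b
  simp [Psi, W0, kapH, hσ1r, mul_smul_comm, tmul_smul, map_smul, smul_tmul]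


def piB : B ⊗[k] H →ₗ[k] B :=
  (TensorProduct.rid k B).toLinearMap ∘ₗ lTensor B (counit (R := k))

def kap1 : H ⊗[k] (H ⊗[k] H) →ₗ[k] H ⊗[k] H :=
  (TensorProduct.lid k (H ⊗[k] H)).toLinearMap ∘ₗ rTensor (H ⊗[k] H) (counit (R := k))

def Sig0 : (H ⊗[k] H) ⊗[k] (H ⊗[k] H) →ₗ[k] B ⊗[k] H :=
  TensorProduct.map σ (LinearMap.mul' k H) ∘ₗ
    (TensorProduct.tensorTensorTensorComm k H H H H).toLinearMap

-- F2
lemma Psi_e (hα1' : ∀ h : H, α (h ⊗ₜ (1 : B)) = (counit (R := k) h) • (1 : B)) :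
    Psi k B H α σ ∘ₗ
      lTensor (H ⊗[k] (H ⊗[k] H)) (TensorProduct.mk k B (H ⊗[k] H) (1 : B))
    = Sig0 k B H σ ∘ₗ rTensor (H ⊗[k] H) (kap1 k H) := by
  ext h1 h2 h3 g1 g2
  simp [Psi, Sig0, kap1, hα1', smul_mul_assoc, smul_tmul', tmul_smul]
  simp [← smul_tmul']

-- F3
lemma piB_Psi :
    piB k B H ∘ₗ Psi k B H α σ
    = LinearMap.mul' k B ∘ₗ TensorProduct.map α σ ∘ₗ
        (TensorProduct.tensorTensorTensorComm k H H B H).toLinearMap ∘ₗ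
        TensorProduct.map (lTensor H (piH k H)) (lTensor B (piH k H)) := by
  ext h1 h2 h3 b g1 g2
  simp [Psi, piB, piH, mul_smul_comm, tmul_smul, map_smul, smul_tmul, smul_smul]
  rw [mul_comm]

-- PS0
lemma piB_Sig0 :
    piB k B H ∘ₗ Sig0 k B H σ = σ ∘ₗ TensorProduct.map (piH k H) (piH k H) := by
  ext h1 h2 g1 g2
  simp [Sig0, piB, piH, mul_smul_comm, tmul_smul, map_smul, smul_tmul, smul_smul, mul_comm]

-- PB1
lemma piB_map_id (f : H →ₗ[k] B) :
    piB k B H ∘ₗ TensorProduct.map f LinearMap.id = f ∘ₗ piH k H := by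
  ext h1 h2
  simp [piB, piH]

-- W0 formula
lemma W0_flip (b : B) :
    W0 k B H α ∘ₗ (TensorProduct.mk k (H ⊗[k] H) B).flip b
      = TensorProduct.map (α ∘ₗ (TensorProduct.mk k H B).flip b) LinearMap.id := by
  ext h1 h2
  simp [W0]

-- counit collapses
lemma G3 (h : H) :
    lTensor H (kapH k H) (lTensor H (comul (R := k)) (comul (R := k) h))
      = comul (R := k) h := by
  rw [← LinearMap.comp_apply, ← lTensor_comp]
  have : kapH k H ∘ₗ (comul (R := k) : H →ₗ[k] H ⊗[k] H) = LinearMap.id := by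
    apply LinearMap.ext; intro x; simp [kapH_comul]
  rw [this, lTensor_id, LinearMap.id_apply]

lemma G5 (h : H) :
    lTensor H (piH k H) (lTensor H (comul (R := k)) (comul (R := k) h))
      = comul (R := k) h := by
  rw [← LinearMap.comp_apply, ← lTensor_comp]
  have : piH k H ∘ₗ (comul (R := k) : H →ₗ[k] H ⊗[k] H) = LinearMap.id := by
    apply LinearMap.ext; intro x; simp [piH_comul]
  rw [this, lTensor_id, LinearMap.id_apply]

lemma G6 (v : B ⊗[k] H) :
    lTensor B (piH k H) (lTensor B (comul (R := k)) v) = v := by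
  rw [← LinearMap.comp_apply, ← lTensor_comp]
  have : piH k H ∘ₗ (comul (R := k) : H →ₗ[k] H ⊗[k] H) = LinearMap.id := by
    apply LinearMap.ext; intro x; simp [piH_comul]
  rw [this, lTensor_id, LinearMap.id_apply]

lemma G4 (h : H) :
    kap1 k H (lTensor H (comul (R := k)) (comul (R := k) h)) = comul (R := k) h := by
  have swap : rTensor (H ⊗[k] H) (counit (R := k)) ∘ₗ lTensor H (comul (R := k))
      = lTensor k (comul (R := k)) ∘ₗ rTensor H (counit (R := k)) := by
    rw [rTensor_comp_lTensor, lTensor_comp_rTensor]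
  have := LinearMap.congr_fun swap (comul (R := k) h)
  simp only [LinearMap.comp_apply] at this
  simp [kap1, this, rTensor_counit_comul]



def PhiM : H ⊗[k] (B ⊗[k] H) →ₗ[k] B ⊗[k] H :=
  Psi k B H α σ ∘ₗ
    TensorProduct.map ((lTensor H (comul (R := k))) ∘ₗ (comul (R := k)))
      (lTensor B (comul (R := k)))

lemma cpMul_eq : cpMul k B H α σ =
    (rTensor H (LinearMap.mul' k B)) ∘ₗ (TensorProduct.assoc k B B H).symm.toLinearMap ∘ₗ
      (lTensor B (PhiM k B H α σ)) ∘ₗ (TensorProduct.assoc k B H (B ⊗[k] H)).toLinearMap := by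
  rfl

lemma one_mul_left (z : B ⊗[k] H) :
    rTensor H (LinearMap.mul' k B) ((TensorProduct.assoc k B B H).symm ((1 : B) ⊗ₜ z)) = z := by
  induction z using TensorProduct.induction_on with
  | zero => simp
  | tmul c h => simp
  | add x y hx hy => simp [tmul_add, map_add, hx, hy]

lemma pi_mul (c : B) (z : B ⊗[k] H) :
    piB k B H (rTensor H (LinearMap.mul' k B) ((TensorProduct.assoc k B B H).symm (c ⊗ₜ z)))
      = c * piB k B H z := by
  induction z using TensorProduct.induction_on with
  | zero => simp
  | tmul d h => simp [piB, mul_smul_comm]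
  | add x y hx hy => simp [tmul_add, map_add, hx, hy, mul_add]

lemma P_mk (c : B) (h : H) (y : B ⊗[k] H) :
    cpMul k B H α σ ((c ⊗ₜ h) ⊗ₜ y)
      = rTensor H (LinearMap.mul' k B)
          ((TensorProduct.assoc k B B H).symm (c ⊗ₜ PhiM k B H α σ (h ⊗ₜ y))) := by
  simp [cpMul_eq]

lemma P_one (h : H) (y : B ⊗[k] H) :
    cpMul k B H α σ (((1:B) ⊗ₜ h) ⊗ₜ y) = PhiM k B H α σ (h ⊗ₜ y) := by
  rw [P_mk]; exact one_mul_left k B H _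

lemma P_pi (c : B) (h : H) (y : B ⊗[k] H) :
    piB k B H (cpMul k B H α σ ((c ⊗ₜ h) ⊗ₜ y))
      = c * piB k B H (PhiM k B H α σ (h ⊗ₜ y)) := by
  rw [P_mk]; exact pi_mul k B H c _

lemma Q1 (hσ1r : ∀ h : H, σ (h ⊗ₜ (1 : H)) = (counit (R := k) h) • (1 : B)) (h : H) (b : B) :
    PhiM k B H α σ (h ⊗ₜ (b ⊗ₜ (1:H)))
      = TensorProduct.map (actOn k B H α b) LinearMap.id (comul (R := k) h) := by
  have e2 := LinearMap.congr_fun (Psi_jj k B H α σ hσ1r)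
      ((lTensor H (comul (R := k)) (comul (R := k) h)) ⊗ₜ b)
  have e3 := LinearMap.congr_fun (W0_flip k B H α b) (comul (R := k) h)
  simp only [LinearMap.comp_apply, lTensor_tmul, rTensor_tmul, TensorProduct.mk_apply,
    LinearMap.flip_apply] at e2 e3
  rw [G3] at e2
  simp only [actOn]
  rw [← e3, ← e2]
  simp [PhiM, Algebra.TensorProduct.one_def]

lemma Q2 (hα1' : ∀ h : H, α (h ⊗ₜ (1 : B)) = (counit (R := k) h) • (1 : B)) (h g : H) :
    PhiM k B H α σ (h ⊗ₜ ((1:B) ⊗ₜ g))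
      = Sig0 k B H σ (comul (R := k) h ⊗ₜ comul (R := k) g) := by
  have e2 := LinearMap.congr_fun (Psi_e k B H α σ hα1')
      ((lTensor H (comul (R := k)) (comul (R := k) h)) ⊗ₜ comul (R := k) g)
  simp only [LinearMap.comp_apply, lTensor_tmul, rTensor_tmul, TensorProduct.mk_apply] at e2
  rw [G4] at e2
  rw [← e2]
  simp [PhiM]

lemma Q3 (h : H) (v : B ⊗[k] H) :
    piB k B H (PhiM k B H α σ (h ⊗ₜ v))
      = LinearMap.mul' k B (TensorProduct.map α σ
          ((TensorProduct.tensorTensorTensorComm k H H B H) (comul (R := k) h ⊗ₜ v))) := by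
  have e2 := LinearMap.congr_fun (piB_Psi k B H α σ)
      ((lTensor H (comul (R := k)) (comul (R := k) h)) ⊗ₜ (lTensor B (comul (R := k)) v))
  simp only [LinearMap.comp_apply, TensorProduct.map_tmul] at e2
  rw [G5, G6] at e2
  have e4 : PhiM k B H α σ (h ⊗ₜ v)
      = Psi k B H α σ ((lTensor H (comul (R := k)) (comul (R := k) h)) ⊗ₜ
          (lTensor B (comul (R := k)) v)) := by simp [PhiM]
  rw [e4]
  exact e2


lemma comb (f : H →ₗ[k] B) (g : H →ₗ[k] B) :
    TensorProduct.map LinearMap.id g ∘ₗ TensorProduct.map f LinearMap.id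
      = TensorProduct.map f g := by
  rw [← TensorProduct.map_comp]; simp

lemma PR1map (hσ1r : ∀ h : H, σ (h ⊗ₜ (1 : H)) = (counit (R := k) h) • (1 : B)) (b : B) :
    piB k B H ∘ₗ cpMul k B H α σ ∘ₗ (TensorProduct.mk k (B ⊗[k] H) (B ⊗[k] H)).flip (b ⊗ₜ (1:H))
      = LinearMap.mul' k B ∘ₗ TensorProduct.map LinearMap.id (actOn k B H α b) := by
  apply TensorProduct.ext'
  intro c h
  have e1 := LinearMap.congr_fun (piB_map_id k B H (actOn k B H α b)) (comul (R := k) h)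
  simp only [LinearMap.comp_apply, TensorProduct.map_tmul] at e1
  simp only [LinearMap.comp_apply, LinearMap.flip_apply, TensorProduct.mk_apply,
    TensorProduct.map_tmul, LinearMap.id_coe, id_eq]
  rw [P_pi, Q1 k B H α σ hσ1r, e1, piH_comul]
  simp [piB, actOn]

lemma PR3map (hα1' : ∀ h : H, α (h ⊗ₜ (1 : B)) = (counit (R := k) h) • (1 : B)) (l : H) :
    piB k B H ∘ₗ cpMul k B H α σ ∘ₗ
        (TensorProduct.mk k (B ⊗[k] H) (B ⊗[k] H)).flip ((1:B) ⊗ₜ l)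
      = LinearMap.mul' k B ∘ₗ
          TensorProduct.map LinearMap.id (σ ∘ₗ (TensorProduct.mk k H H).flip l) := by
  apply TensorProduct.ext'
  intro c h
  have e1 := LinearMap.congr_fun (piB_Sig0 k B H σ) (comul (R := k) h ⊗ₜ comul (R := k) l)
  simp only [LinearMap.comp_apply, TensorProduct.map_tmul] at e1
  rw [piH_comul, piH_comul] at e1
  simp only [LinearMap.comp_apply, LinearMap.flip_apply, TensorProduct.mk_apply,
    TensorProduct.map_tmul, LinearMap.id_coe, id_eq]
  rw [P_pi, Q2 k B H α σ hα1', e1]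
  simp [piB]

lemma TW (a b : B) :
    TensorProduct.map α α ∘ₗ (TensorProduct.tensorTensorTensorComm k H H B B).toLinearMap ∘ₗ
        (TensorProduct.mk k (H ⊗[k] H) (B ⊗[k] B)).flip (a ⊗ₜ b)
      = TensorProduct.map (actOn k B H α a) (actOn k B H α b) := by
  ext h1 h2
  simp [actOn]

lemma weak_mul (hσ1r : ∀ h : H, σ (h ⊗ₜ (1 : H)) = (counit (R := k) h) • (1 : B))
    (hα1 : ∀ b : B, α ((1 : H) ⊗ₜ b) = b)
    (halg1 : ∀ x y z : B ⊗[k] H,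
      cpMul k B H α σ ((cpMul k B H α σ (x ⊗ₜ y)) ⊗ₜ z)
        = cpMul k B H α σ (x ⊗ₜ (cpMul k B H α σ (y ⊗ₜ z))))
    (h : H) (a b : B) :
    α (h ⊗ₜ (a * b)) =
      LinearMap.mul' k B ((TensorProduct.map α α)
        ((TensorProduct.tensorTensorTensorComm k H H B B)
          ((comul (R := k) h) ⊗ₜ (a ⊗ₜ b)))) := by
  have hu : cpMul k B H α σ (((1:B) ⊗ₜ h) ⊗ₜ (a ⊗ₜ (1:H)))
      = TensorProduct.map (actOn k B H α a) LinearMap.id (comul (R := k) h) := by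
    rw [P_one, Q1 k B H α σ hσ1r]
  have hab : cpMul k B H α σ ((a ⊗ₜ (1:H)) ⊗ₜ (b ⊗ₜ (1:H))) = (a * b) ⊗ₜ (1:H) := by
    rw [P_mk, Q1 k B H α σ hσ1r]
    simp [actOn, hα1, Algebra.TensorProduct.one_def]
  have hassoc := halg1 ((1:B) ⊗ₜ h) (a ⊗ₜ (1:H)) (b ⊗ₜ (1:H))
  rw [hu, hab, P_one, Q1 k B H α σ hσ1r] at hassoc
  have h2 := congrArg (piB k B H) hassoc
  -- LHS of h2
  have e5 := LinearMap.congr_fun (PR1map k B H α σ hσ1r b)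
      (TensorProduct.map (actOn k B H α a) LinearMap.id (comul (R := k) h))
  simp only [LinearMap.comp_apply, LinearMap.flip_apply, TensorProduct.mk_apply] at e5
  rw [e5] at h2
  have e6 := LinearMap.congr_fun (comb k B H (actOn k B H α a) (actOn k B H α b))
      (comul (R := k) h)
  simp only [LinearMap.comp_apply] at e6
  rw [e6] at h2
  -- RHS of h2
  have e7 := LinearMap.congr_fun (piB_map_id k B H (actOn k B H α (a * b))) (comul (R := k) h)
  simp only [LinearMap.comp_apply] at e7
  rw [e7, piH_comul] at h2
  have e8 := LinearMap.congr_fun (TW k B H α a b) (comul (R := k) h)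
  simp only [LinearMap.comp_apply, LinearMap.flip_apply, TensorProduct.mk_apply] at e8
  rw [← e8] at h2
  simpa [actOn] using h2.symm



lemma TW2 (b : B) :
    LinearMap.mul' k B ∘ₗ TensorProduct.map LinearMap.id (actOn k B H α b) ∘ₗ Sig0 k B H σ
      = LinearMap.mul' k B ∘ₗ TensorProduct.map σ ((actOn k B H α b) ∘ₗ LinearMap.mul' k H) ∘ₗ
          (TensorProduct.tensorTensorTensorComm k H H H H).toLinearMap := by
  ext h1 h2 g1 g2
  simp [Sig0, actOn]

lemma TW3 (b : B) :
    LinearMap.mul' k B ∘ₗ TensorProduct.map α σ ∘ₗ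
        (TensorProduct.tensorTensorTensorComm k H H B H).toLinearMap ∘ₗ
        lTensor (H ⊗[k] H) (TensorProduct.map (actOn k B H α b) LinearMap.id)
      = LinearMap.mul' k B ∘ₗ
          TensorProduct.map (α ∘ₗ lTensor H (actOn k B H α b)) σ ∘ₗ
          (TensorProduct.tensorTensorTensorComm k H H H H).toLinearMap := by
  ext h1 h2 g1 g2
  simp [actOn]

lemma twisted_eq (hσ1r : ∀ h : H, σ (h ⊗ₜ (1 : H)) = (counit (R := k) h) • (1 : B))
    (hα1' : ∀ h : H, α (h ⊗ₜ (1 : B)) = (counit (R := k) h) • (1 : B))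
    (halg1 : ∀ x y z : B ⊗[k] H,
      cpMul k B H α σ ((cpMul k B H α σ (x ⊗ₜ y)) ⊗ₜ z)
        = cpMul k B H α σ (x ⊗ₜ (cpMul k B H α σ (y ⊗ₜ z))))
    (b : B) :
    conv k (α ∘ₗ lTensor H (actOn k B H α b)) σ
      = conv k σ ((actOn k B H α b) ∘ₗ LinearMap.mul' k H) := by
  apply TensorProduct.ext'
  intro h g
  have hy : cpMul k B H α σ (((1:B) ⊗ₜ h) ⊗ₜ ((1:B) ⊗ₜ g))
      = Sig0 k B H σ (comul (R := k) h ⊗ₜ comul (R := k) g) := by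
    rw [P_one, Q2 k B H α σ hα1']
  have hv : cpMul k B H α σ (((1:B) ⊗ₜ g) ⊗ₜ (b ⊗ₜ (1:H)))
      = TensorProduct.map (actOn k B H α b) LinearMap.id (comul (R := k) g) := by
    rw [P_one, Q1 k B H α σ hσ1r]
  have hassoc := halg1 ((1:B) ⊗ₜ h) ((1:B) ⊗ₜ g) (b ⊗ₜ (1:H))
  rw [hy, hv] at hassoc
  have h2 := congrArg (piB k B H) hassoc
  rw [P_one] at h2
  have e5 := LinearMap.congr_fun (PR1map k B H α σ hσ1r b)
      (Sig0 k B H σ (comul (R := k) h ⊗ₜ comul (R := k) g))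
  simp only [LinearMap.comp_apply, LinearMap.flip_apply, TensorProduct.mk_apply] at e5
  rw [e5, Q3] at h2
  have e6 := LinearMap.congr_fun (TW2 k B H α σ b) (comul (R := k) h ⊗ₜ comul (R := k) g)
  simp only [LinearMap.comp_apply] at e6
  rw [e6] at h2
  have e7 := LinearMap.congr_fun (TW3 k B H α σ b) (comul (R := k) h ⊗ₜ comul (R := k) g)
  simp only [LinearMap.comp_apply, lTensor_tmul] at e7
  exact (by simpa [conv, LinearMap.comp_apply, AlgebraTensorModule.tensorTensorTensorComm_eq] using (e7.symm.trans h2.symm) :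
    conv k (α ∘ₗ lTensor H (actOn k B H α b)) σ (h ⊗ₜ g)
      = conv k σ ((actOn k B H α b) ∘ₗ LinearMap.mul' k H) (h ⊗ₜ g))


section Generic
variable {M N P Q : Type} [AddCommGroup M] [Module k M] [AddCommGroup N] [Module k N]
  [AddCommGroup P] [Module k P] [AddCommGroup Q] [Module k Q]

lemma ttt_mk (x : M) (y : N) (w : P ⊗[k] Q) :
    (TensorProduct.tensorTensorTensorComm k M N P Q) ((x ⊗ₜ y) ⊗ₜ w)
      = TensorProduct.map (TensorProduct.mk k M P x) (TensorProduct.mk k N Q y) w := by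
  induction w using TensorProduct.induction_on with
  | zero => simp [tmul_zero]
  | tmul p q => simp
  | add u v hu hv => simp [tmul_add, map_add, hu, hv]

end Generic

lemma KEY (ψ : H →ₗ[k] B) (l : H) :
    LinearMap.mul' k B (TensorProduct.map ((Algebra.linearMap k B) ∘ₗ (counit (R := k))) ψ
      (comul (R := k) l)) = ψ l := by
  have e1 := LinearMap.congr_fun
    (LinearMap.map_comp_rTensor _ (Algebra.linearMap k B) ψ (counit (R := k) (A := H)))
    (comul (R := k) l)
  simp only [LinearMap.comp_apply] at e1
  rw [← e1, Coalgebra.rTensor_counit_comul]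
  simp

lemma mulLeft_pull (c : B) (μ ψ : H →ₗ[k] B) (w : H ⊗[k] H) :
    LinearMap.mul' k B (TensorProduct.map (LinearMap.mulLeft k c ∘ₗ μ) ψ w)
      = c * LinearMap.mul' k B (TensorProduct.map μ ψ w) := by
  induction w using TensorProduct.induction_on with
  | zero => simp
  | tmul x y => simp [mul_assoc]
  | add u v hu hv => simp [map_add, mul_add, hu, hv]

lemma CO5 :
    LinearMap.mul' k B ∘ₗ TensorProduct.map α σ ∘ₗ
        (TensorProduct.tensorTensorTensorComm k H H B H).toLinearMap ∘ₗ
        lTensor (H ⊗[k] H) (Sig0 k B H σ)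
      = LinearMap.mul' k B ∘ₗ
          TensorProduct.map (α ∘ₗ lTensor H σ) (σ ∘ₗ lTensor H (LinearMap.mul' k H)) ∘ₗ
          (TensorProduct.tensorTensorTensorComm k H H (H ⊗[k] H) (H ⊗[k] H)).toLinearMap ∘ₗ
          lTensor (H ⊗[k] H) (TensorProduct.tensorTensorTensorComm k H H H H).toLinearMap := by
  ext h1 h2 g1 g2 l1 l2
  simp [Sig0]

lemma CC (l : H) :
    (LinearMap.mul' k B ∘ₗ
        TensorProduct.map (σ ∘ₗ lTensor H (piH k H))
          (σ ∘ₗ rTensor H (LinearMap.mul' k H) ∘ₗ (TensorProduct.assoc k H H H).symm.toLinearMap) ∘ₗ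
        (TensorProduct.tensorTensorTensorComm k H H (H ⊗[k] H) (H ⊗[k] H)).toLinearMap ∘ₗ
        lTensor (H ⊗[k] H) (TensorProduct.tensorTensorTensorComm k H H H H).toLinearMap) ∘ₗ
      lTensor (H ⊗[k] H) ((TensorProduct.mk k (H ⊗[k] H) (H ⊗[k] H)).flip (comul (R := k) l))
    = LinearMap.mul' k B ∘ₗ
        TensorProduct.map LinearMap.id (σ ∘ₗ (TensorProduct.mk k H H).flip l) ∘ₗ
        Sig0 k B H σ := by
  ext h1 h2 g1 g2
  have coll : ∀ w : H ⊗[k] H,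
      TensorProduct.map (σ ∘ₗ lTensor H (piH k H))
          (σ ∘ₗ rTensor H (LinearMap.mul' k H) ∘ₗ (TensorProduct.assoc k H H H).symm.toLinearMap)
        (TensorProduct.map (TensorProduct.mk k H (H ⊗[k] H) h1)
          (TensorProduct.mk k H (H ⊗[k] H) h2)
          (TensorProduct.map (TensorProduct.mk k H H g1) (TensorProduct.mk k H H g2) w))
      = TensorProduct.map
          ((σ ∘ₗ lTensor H (piH k H)) ∘ₗ TensorProduct.mk k H (H ⊗[k] H) h1 ∘ₗ
            TensorProduct.mk k H H g1)
          ((σ ∘ₗ rTensor H (LinearMap.mul' k H) ∘ₗ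
              (TensorProduct.assoc k H H H).symm.toLinearMap) ∘ₗ
            TensorProduct.mk k H (H ⊗[k] H) h2 ∘ₗ TensorProduct.mk k H H g2) w := by
    intro w
    induction w using TensorProduct.induction_on with
    | zero => simp
    | tmul x y => simp
    | add u v hu hv => simp [map_add, hu, hv]
  have phi1 : (σ ∘ₗ lTensor H (piH k H)) ∘ₗ TensorProduct.mk k H (H ⊗[k] H) h1 ∘ₗ
      TensorProduct.mk k H H g1
      = LinearMap.mulLeft k (σ (h1 ⊗ₜ g1)) ∘ₗ ((Algebra.linearMap k B) ∘ₗ (counit (R := k))) := by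
    apply LinearMap.ext; intro l1
    simp only [LinearMap.comp_apply, TensorProduct.mk_apply, lTensor_tmul,
      LinearMap.mulLeft_apply, Algebra.linearMap_apply]
    have hp : piH k H (g1 ⊗ₜ l1) = counit (R := k) l1 • g1 := by simp [piH]
    rw [hp, tmul_smul, map_smul, Algebra.smul_def, Algebra.commutes]
  have phi2 : (σ ∘ₗ rTensor H (LinearMap.mul' k H) ∘ₗ
      (TensorProduct.assoc k H H H).symm.toLinearMap) ∘ₗ
      TensorProduct.mk k H (H ⊗[k] H) h2 ∘ₗ TensorProduct.mk k H H g2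
      = σ ∘ₗ TensorProduct.mk k H H (h2 * g2) := by
    apply LinearMap.ext; intro l2
    rfl
  simp only [TensorProduct.AlgebraTensorModule.curry_apply, TensorProduct.curry_apply,
    LinearMap.coe_restrictScalars, LinearMap.comp_apply, lTensor_tmul, LinearMap.flip_apply,
    TensorProduct.mk_apply, LinearEquiv.coe_coe]
  rw [ttt_mk, ttt_mk, coll, phi1, phi2]
  rw [mulLeft_pull, KEY]
  simp [Sig0]


lemma cocycle_eq (hσ1r : ∀ h : H, σ (h ⊗ₜ (1 : H)) = (counit (R := k) h) • (1 : B))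
    (hα1' : ∀ h : H, α (h ⊗ₜ (1 : B)) = (counit (R := k) h) • (1 : B))
    (halg1 : ∀ x y z : B ⊗[k] H,
      cpMul k B H α σ ((cpMul k B H α σ (x ⊗ₜ y)) ⊗ₜ z)
        = cpMul k B H α σ (x ⊗ₜ (cpMul k B H α σ (y ⊗ₜ z)))) :
    conv k (α ∘ₗ lTensor H σ) (σ ∘ₗ lTensor H (LinearMap.mul' k H))
      = conv k
          (σ ∘ₗ lTensor H ((TensorProduct.rid k H).toLinearMap ∘ₗ
            lTensor H (counit (R := k))))
          (σ ∘ₗ (rTensor H (LinearMap.mul' k H)) ∘ₗ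
            (TensorProduct.assoc k H H H).symm.toLinearMap) := by
  ext h g l
  have hy : cpMul k B H α σ (((1:B) ⊗ₜ h) ⊗ₜ ((1:B) ⊗ₜ g))
      = Sig0 k B H σ (comul (R := k) h ⊗ₜ comul (R := k) g) := by
    rw [P_one, Q2 k B H α σ hα1']
  have hv : cpMul k B H α σ (((1:B) ⊗ₜ g) ⊗ₜ ((1:B) ⊗ₜ l))
      = Sig0 k B H σ (comul (R := k) g ⊗ₜ comul (R := k) l) := by
    rw [P_one, Q2 k B H α σ hα1']
  have hassoc := halg1 ((1:B) ⊗ₜ h) ((1:B) ⊗ₜ g) ((1:B) ⊗ₜ l)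
  rw [hy, hv] at hassoc
  have h2 := congrArg (piB k B H) hassoc
  have e5 := LinearMap.congr_fun (PR3map k B H α σ hα1' l)
      (Sig0 k B H σ (comul (R := k) h ⊗ₜ comul (R := k) g))
  simp only [LinearMap.comp_apply, LinearMap.flip_apply, TensorProduct.mk_apply] at e5
  rw [e5, P_one, Q3] at h2
  have e6 := LinearMap.congr_fun (CO5 k B H α σ)
      (comul (R := k) h ⊗ₜ (comul (R := k) g ⊗ₜ comul (R := k) l))
  simp only [LinearMap.comp_apply, lTensor_tmul, LinearEquiv.coe_coe] at e6
  have e7 := LinearMap.congr_fun (CC k B H σ l) (comul (R := k) h ⊗ₜ comul (R := k) g)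
  simp only [LinearMap.comp_apply, lTensor_tmul, LinearMap.flip_apply, TensorProduct.mk_apply,
    LinearEquiv.coe_coe] at e7
  simpa [conv, piH, AlgebraTensorModule.tensorTensorTensorComm_eq] using (e6.symm.trans (h2.symm.trans e7.symm))


end AuxProof

/-- conversely, if the crossed-product multiplication is associative and
unital (with the stated normalisations), then `α` is a weak action, `σ` a 2-cocycle and
`B` a twisted `H`-module. -/
theorem crossed_product_isAlgebra_converse (k B H : Type) [Field k] [Ring B] [Algebra k B] [Ring H] [HopfAlgebra k H]
    (α : H ⊗[k] B →ₗ[k] B) (σ : H ⊗[k] H →ₗ[k] B)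
    (hσinv : ConvInvertible k σ)
    (hσ1l : ∀ h : H, σ ((1 : H) ⊗ₜ h) = (Coalgebra.counit (R := k) h) • (1 : B))
    (hσ1r : ∀ h : H, σ (h ⊗ₜ (1 : H)) = (Coalgebra.counit (R := k) h) • (1 : B))
    (hα1 : ∀ b : B, α ((1 : H) ⊗ₜ b) = b)
    (hα1' : ∀ h : H, α (h ⊗ₜ (1 : B)) = (Coalgebra.counit (R := k) h) • (1 : B))
    (halg : IsCpAlgebra k B H α σ) :
    IsWeakAction k B H α ∧ IsCocycle k B H α σ ∧ IsTwistedModule k B H α σ := by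
  obtain ⟨halg1, -, -⟩ := halg
  refine ⟨⟨fun h a b => weak_mul k B H α σ hσ1r hα1 halg1 h a b, hα1'⟩,
    ⟨cocycle_eq k B H α σ hσ1r hα1' halg1, hσ1r, hσ1l⟩,
    ⟨hα1, fun b => twisted_eq k B H α σ hσ1r hα1' halg1 b⟩⟩

end CrossedGalois
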